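/- For rays x, y, z in a complex Hilbert space, pairwise non-orthogonal, and r ∈ [0,1], with ω := 1 + 2√(r(1−r)p(y,z)): p(ry + (1−r)z, x) = [r·p(y,x) + (1−r)·p(z,x) + 2cos(θ(x,y,z))·√(r(1−r)p(y,x)p(z,x))] / ω. -/

import Mathlib

local notation "⟪" x ", " y "⟫" => @inner ℂ _ _ x y

theorem p_of_superposition {H : Type*} [NormedAddCommGroup H]
    [InnerProductSpace ℂ H]
    (x y z : Submodule ℂ H) (u v w : H)
    (hu : ‖u‖ = 1) (hv : ‖v‖ = 1) (hw : ‖w‖ = 1)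
    (hx : x = Submodule.span ℂ {u}) (hy : y = Submodule.span ℂ {v})
    (hz : z = Submodule.span ℂ {w})
    (hxy : ⟪u, v⟫ ≠ 0) (hyz : ⟪v, w⟫ ≠ 0) (hzx : ⟪w, u⟫ ≠ 0)
    (him : (⟪v, w⟫).im = 0) (hre : 0 < (⟪v, w⟫).re)
    (r : ℝ) (hr0 : 0 ≤ r) (hr1 : r ≤ 1)
    (s : H) (hs : s = (Real.sqrt r : ℂ) • v + (Real.sqrt (1 - r) : ℂ) • w)
    (θ : ℝ)
    (hθ : θ = Complex.arg ⟪u, v⟫ + Complex.arg ⟪v, w⟫ + Complex.arg ⟪w, u⟫) :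
    ‖⟪s, u⟫‖ ^ 2 / ‖s‖ ^ 2 =
      (r * ‖⟪v, u⟫‖ ^ 2 + (1 - r) * ‖⟪w, u⟫‖ ^ 2 +
        2 * Real.cos θ *
          Real.sqrt (r * (1 - r) * (‖⟪v, u⟫‖ ^ 2) * (‖⟪w, u⟫‖ ^ 2))) /
      (1 + 2 * Real.sqrt (r * (1 - r) * (‖⟪v, w⟫‖ ^ 2))) := by
  set a := (⟪v, u⟫ : ℂ) with ha_def
  set b := (⟪w, u⟫ : ℂ) with hb_def
  set c := (⟪v, w⟫ : ℂ) with hc_def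
  have hr1' : (0:ℝ) ≤ 1 - r := by linarith
  have ha : a ≠ 0 := by
    intro h
    apply hxy
    rw [← inner_conj_symm u v, ← ha_def, h, map_zero]
  have hb : b ≠ 0 := hzx
  -- c is a positive real
  have hcre : c = ((c.re : ℝ) : ℂ) := by
    have h0 := Complex.re_add_im c
    rw [him] at h0
    simpa using h0.symm
  have hcabs : ‖c‖ = c.re := by
    rw [hcre, Complex.norm_real, Complex.ofReal_re, Real.norm_eq_abs, abs_of_pos hre]
  -- inner s u
  have hsu : ⟪s, u⟫ = (Real.sqrt r : ℂ) * a + (Real.sqrt (1 - r) : ℂ) * b := by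
    rw [hs, inner_add_left, inner_smul_left, inner_smul_left, Complex.conj_ofReal,
      Complex.conj_ofReal, ha_def, hb_def]
  -- the cosine identity
  have hargc : Complex.arg c = 0 := Complex.arg_eq_zero_iff.mpr ⟨hre.le, him⟩
  have hconj : (⟪u, v⟫ : ℂ) = starRingEnd ℂ a := (inner_conj_symm u v).symm
  have hca : starRingEnd ℂ a ≠ 0 := by simpa using ha
  have hcos : ((starRingEnd ℂ a) * b).re = Real.cos θ * (‖a‖ * ‖b‖) := by
    have h1 : Real.cos θ = Real.cos (Complex.arg ((starRingEnd ℂ a) * b)) := by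
      rw [hθ, hargc, hconj]
      have h2 := Complex.arg_mul_coe_angle hca hb
      have h3 : ((Complex.arg ((starRingEnd ℂ a) * b) : ℝ) : Real.Angle) =
          ((Complex.arg (starRingEnd ℂ a) + 0 + Complex.arg b : ℝ) : Real.Angle) := by
        rw [h2, show Complex.arg (starRingEnd ℂ a) + 0 + Complex.arg b =
          Complex.arg (starRingEnd ℂ a) + Complex.arg b from by ring, Real.Angle.coe_add]
      calc Real.cos (Complex.arg (starRingEnd ℂ a) + 0 + Complex.arg b)
          = Real.Angle.cos ((Complex.arg (starRingEnd ℂ a) + 0 + Complex.arg b : ℝ) : Real.Angle) := (Real.Angle.cos_coe _).symm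
        _ = Real.Angle.cos ((Complex.arg ((starRingEnd ℂ a) * b) : ℝ) : Real.Angle) := by rw [h3]
        _ = Real.cos (Complex.arg ((starRingEnd ℂ a) * b)) := Real.Angle.cos_coe _
    have hab : (starRingEnd ℂ a) * b ≠ 0 := mul_ne_zero hca hb
    have habs : ‖a‖ * ‖b‖ ≠ 0 :=
      mul_ne_zero (by simpa using ha) (by simpa using hb)
    rw [h1, Complex.cos_arg hab, norm_mul, Complex.norm_conj, div_mul_cancel₀ _ habs]
  -- |⟪s,u⟫|²
  have h_num : ‖⟪s, u⟫‖ ^ 2 =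
      r * ‖a‖ ^ 2 + (1 - r) * ‖b‖ ^ 2 +
        2 * Real.sqrt r * Real.sqrt (1 - r) * Real.cos θ * (‖a‖ * ‖b‖) := by
    rw [hsu, Complex.sq_norm, Complex.normSq_add, Complex.normSq_mul, Complex.normSq_mul,
      Complex.normSq_ofReal, Complex.normSq_ofReal, Real.mul_self_sqrt hr0,
      Real.mul_self_sqrt hr1']
    have : ((Real.sqrt r : ℂ) * a * (starRingEnd ℂ ((Real.sqrt (1 - r) : ℂ) * b))).re =
        Real.sqrt r * Real.sqrt (1 - r) * ((starRingEnd ℂ a) * b).re := by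
      rw [map_mul, Complex.conj_ofReal]
      simp [Complex.mul_re, Complex.ofReal_re, Complex.ofReal_im, Complex.conj_re, Complex.conj_im]
      ring
    rw [this, hcos, Complex.sq_norm, Complex.sq_norm]
    ring
  -- ‖s‖²
  have h_den : ‖s‖ ^ 2 = 1 + 2 * Real.sqrt r * Real.sqrt (1 - r) * c.re := by
    rw [hs, @norm_add_sq ℂ, inner_smul_left, inner_smul_right, norm_smul, norm_smul, hv, hw,
      ← hc_def, Complex.conj_ofReal]
    simp only [Complex.norm_real, Real.norm_eq_abs, mul_one, RCLike.re_to_complex,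
      abs_of_nonneg (Real.sqrt_nonneg r), abs_of_nonneg (Real.sqrt_nonneg (1 - r))]
    rw [Real.sq_sqrt hr0, Real.sq_sqrt hr1', Complex.re_ofReal_mul, Complex.re_ofReal_mul]
    ring
  -- sqrt simplifications
  have hsq1 : Real.sqrt (r * (1 - r) * (‖a‖ ^ 2) * (‖b‖ ^ 2)) =
      Real.sqrt r * Real.sqrt (1 - r) * (‖a‖ * ‖b‖) := by
    have h : r * (1 - r) * (‖a‖ ^ 2) * (‖b‖ ^ 2) =
        (Real.sqrt r * Real.sqrt (1 - r) * (‖a‖ * ‖b‖)) ^ 2 := by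
      rw [mul_pow, mul_pow, mul_pow, Real.sq_sqrt hr0, Real.sq_sqrt hr1']
      ring
    rw [h, Real.sqrt_sq (by positivity)]
  have hsq2 : Real.sqrt (r * (1 - r) * (‖c‖ ^ 2)) =
      Real.sqrt r * Real.sqrt (1 - r) * c.re := by
    have h : r * (1 - r) * (‖c‖ ^ 2) =
        (Real.sqrt r * Real.sqrt (1 - r) * c.re) ^ 2 := by
      rw [hcabs, mul_pow, mul_pow, Real.sq_sqrt hr0, Real.sq_sqrt hr1']
      try ring
    have hcre0 : 0 ≤ c.re := hre.le
    rw [h, Real.sqrt_sq (by positivity)]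
  rw [h_num, h_den, hsq1, hsq2]
  ring_nf
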